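/- arXiv:2310.12993 — 2 statements merged into one kernel-verified Lean document; each statement's English description precedes it below -/
import Mathlib

section
/- For every real number α with 0 < α ≤ log 2 / log(21/16), the inequality (1 + y)^{1/α}·(1 − y/9) ≥ 1 + y/6 holds for all y ∈ [0, 1]. -/
open Real Set

noncomputable def B : ℝ := Real.log (21/16) / Real.log 2

lemma hlog2 : (0:ℝ) < Real.log 2 := Real.log_pos (by norm_num)
lemma hlog2116 : (0:ℝ) < Real.log (21/16) := Real.log_pos (by norm_num)

lemma B_pos : 0 < B := div_pos hlog2116 hlog2

lemma B_ge : (1:ℝ)/4 ≤ B := by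
  rw [B, le_div_iff₀ hlog2]
  have h := Real.log_le_log (by norm_num) (by norm_num : (2:ℝ) ≤ (21/16)^4)
  rw [Real.log_pow] at h
  push_cast at h
  linarith

lemma B_mul : B * Real.log 2 = Real.log (21/16) := by
  rw [B, div_mul_cancel₀ _ (ne_of_gt hlog2)]

noncomputable def F : ℝ → ℝ := fun y =>
  B * Real.log (1+y) + Real.log (9-y) - Real.log (6+y) - (Real.log 9 - Real.log 6)

noncomputable def F1 : ℝ → ℝ := fun y => B * (1/(1+y)) + (-1)/(9-y) - 1/(6+y)

lemma hFd {x : ℝ} (hx : x ∈ Set.Icc (0:ℝ) 1) : HasDerivAt F (F1 x) x := by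
  obtain ⟨hx0, hx1⟩ := hx
  have h1 : (1:ℝ) + x ≠ 0 := by linarith
  have h2 : (9:ℝ) - x ≠ 0 := by linarith
  have h3 : (6:ℝ) + x ≠ 0 := by linarith
  have d1 : HasDerivAt (fun y : ℝ => Real.log (1+y)) (1/(1+x)) x := by
    simpa using (((hasDerivAt_id x).const_add 1).log h1)
  have d2 : HasDerivAt (fun y : ℝ => Real.log (9-y)) ((-1)/(9-x)) x := by
    simpa using (((hasDerivAt_id x).const_sub 9).log h2)
  have d3 : HasDerivAt (fun y : ℝ => Real.log (6+y)) (1/(6+x)) x := by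
    simpa using (((hasDerivAt_id x).const_add 6).log h3)
  have := (((d1.const_mul B).add d2).sub d3).sub_const (Real.log 9 - Real.log 6)
  unfold F
  simpa [F1, mul_one_div] using this

noncomputable def F2 : ℝ → ℝ := fun y => -B/(1+y)^2 - 1/(9-y)^2 + 1/(6+y)^2

lemma hF1d {x : ℝ} (hx : x ∈ Set.Icc (0:ℝ) 1) : HasDerivAt F1 (F2 x) x := by
  obtain ⟨hx0, hx1⟩ := hx
  have h1 : (1:ℝ) + x ≠ 0 := by linarith
  have h2 : (9:ℝ) - x ≠ 0 := by linarith
  have h3 : (6:ℝ) + x ≠ 0 := by linarith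
  have e1 : HasDerivAt (fun y : ℝ => (1:ℝ)+y) 1 x := (hasDerivAt_id x).const_add 1
  have e2 : HasDerivAt (fun y : ℝ => (9:ℝ)-y) (-1) x := by
    simpa using (hasDerivAt_id x).const_sub 9
  have e3 : HasDerivAt (fun y : ℝ => (6:ℝ)+y) 1 x := (hasDerivAt_id x).const_add 6
  have d1 := (hasDerivAt_const x B).div e1 h1
  have d2 := (hasDerivAt_const x (-1:ℝ)).div e2 h2
  have d3 := (hasDerivAt_const x (1:ℝ)).div e3 h3
  have := (d1.add d2).sub d3
  have heq : HasDerivAt F1 ((0 * (1 + x) - B * 1) / (1 + x) ^ 2 +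
      (0 * (9 - x) - -1 * -1) / (9 - x) ^ 2 - (0 * (6 + x) - 1 * 1) / (6 + x) ^ 2) x := by
    refine this.congr_of_eventuallyEq (Filter.Eventually.of_forall fun y => ?_)
    simp [F1, mul_one_div, div_eq_mul_inv]
  convert heq using 1
  simp only [F2]
  field_simp
  ring

lemma F_zero : F 0 = 0 := by
  norm_num [F]

lemma F_one : F 1 = 0 := by
  have e : ((9:ℝ)/6)/((8:ℝ)/7) = 21/16 := by norm_num
  have h : Real.log ((21:ℝ)/16) =
      (Real.log 9 - Real.log 6) - (Real.log 8 - Real.log 7) := by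
    rw [← Real.log_div (by norm_num) (by norm_num),
        ← Real.log_div (by norm_num) (by norm_num),
        ← Real.log_div (by norm_num) (by norm_num), e]
  have : F 1 = B * Real.log 2 + Real.log 8 - Real.log 7 - (Real.log 9 - Real.log 6) := by
    norm_num [F]
  rw [this, B_mul, h]; ring

lemma F_concave : ConcaveOn ℝ (Set.Icc (0:ℝ) 1) F := by
  apply concaveOn_of_hasDerivWithinAt2_nonpos (f' := F1) (f'' := F2) (convex_Icc 0 1)
  · exact fun x hx => (hFd hx).continuousAt.continuousWithinAt
  · exact fun x hx => (hFd (interior_subset hx)).hasDerivWithinAt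
  · exact fun x hx => (hF1d (interior_subset hx)).hasDerivWithinAt
  · intro x hx
    rw [interior_Icc] at hx
    obtain ⟨hx0, hx1⟩ := hx
    have hb := B_ge
    have p1 : (0:ℝ) < (1+x)^2 := by positivity
    have p3 : (0:ℝ) < (6+x)^2 := by positivity
    have key : 1/(6+x)^2 ≤ B/(1+x)^2 := by
      rw [div_le_div_iff₀ p3 p1]; nlinarith
    have h9 : (0:ℝ) ≤ 1/(9-x)^2 := by positivity
    simp only [F2, neg_div]
    linarith

lemma F_nonneg {y : ℝ} (hy : y ∈ Set.Icc (0:ℝ) 1) : 0 ≤ F y := by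
  obtain ⟨hy0, hy1⟩ := hy
  have := F_concave.2 (Set.left_mem_Icc.2 zero_le_one) (Set.right_mem_Icc.2 zero_le_one)
    (by linarith : (0:ℝ) ≤ 1 - y) hy0 (by ring)
  simpa [F_zero, F_one] using this

theorem G_two_nonneg (α : ℝ) (h1 : 0 < α) (h2 : α ≤ Real.log 2 / Real.log (21/16)) :
    ∀ y ∈ Set.Icc (0:ℝ) 1, (1 + y) ^ (1/α) * (1 - y/9) ≥ 1 + y/6 := by
  intro y hy
  obtain ⟨hy0, hy1⟩ := hy
  have h9 : (0:ℝ) < 1 - y/9 := by linarith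
  have h6 : (0:ℝ) < 1 + y/6 := by linarith
  have h1y : (0:ℝ) < 1 + y := by linarith
  have hBle : B ≤ 1/α := by
    rw [B, div_le_div_iff₀ hlog2 h1]
    have := (le_div_iff₀ hlog2116).mp h2
    nlinarith
  have step1 : (1+y)^B ≤ (1+y)^(1/α) :=
    Real.rpow_le_rpow_of_exponent_le (by linarith) hBle
  have step2 : 1 + y/6 ≤ (1+y)^B * (1-y/9) := by
    have hrp : (0:ℝ) < (1+y)^B := Real.rpow_pos_of_pos h1y B
    rw [← Real.log_le_log_iff h6 (by positivity)]
    rw [Real.log_mul (ne_of_gt hrp) (ne_of_gt h9), Real.log_rpow h1y]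
    have e1 : (1:ℝ)+y/6 = (6+y)/6 := by ring
    have e2 : (1:ℝ)-y/9 = (9-y)/9 := by ring
    rw [e1, e2, Real.log_div (by linarith) (by norm_num),
        Real.log_div (by linarith) (by norm_num)]
    have hF := F_nonneg ⟨hy0, hy1⟩
    simp only [F] at hF
    linarith
  calc (1:ℝ) + y/6 ≤ (1+y)^B * (1-y/9) := step2
    _ ≤ (1+y)^(1/α) * (1-y/9) := mul_le_mul_of_nonneg_right step1 h9.le
end

section
/- For every real number θ with 0 < θ < 1, the inequality sin²(πθ)·(1/θ² + 1/(1−θ)²) ≥ 8 holds, with equality if and only if θ = 1/2. -/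
open Real

lemma mono_aux {f : ℝ → ℝ} {f' : ℝ → ℝ}
    (hd : ∀ y, HasDerivAt f (f' y) y) (hp : ∀ y, 0 ≤ y → 0 ≤ f' y)
    {x : ℝ} (hx : 0 ≤ x) : f 0 ≤ f x := by
  have h : MonotoneOn f (Set.Ici (0:ℝ)) := by
    apply monotoneOn_of_deriv_nonneg (convex_Ici 0)
    · exact fun y _ => (hd y).continuousAt.continuousWithinAt
    · exact fun y _ => (hd y).differentiableAt.differentiableWithinAt
    · intro y hy
      rw [(hd y).deriv]
      exact hp y (le_of_lt (by simpa using hy))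
  exact h Set.self_mem_Ici hx hx

lemma sin_ge_cubic {x : ℝ} (hx : 0 ≤ x) : x - x^3/6 ≤ Real.sin x := by
  have := mono_aux (f := fun x => Real.sin x - x + x^3/6)
    (f' := fun y => Real.cos y - 1 + y^2/2)
    (fun y => by
      have := ((Real.hasDerivAt_sin y).sub (hasDerivAt_id y)).add
        ((hasDerivAt_pow 3 y).div_const 6)
      exact this.congr_deriv (by norm_num; ring))
    (fun y _ => by nlinarith [Real.one_sub_sq_div_two_le_cos (x := y)]) hx
  simp at this; linarith

lemma cos_le_quartic {x : ℝ} (hx : 0 ≤ x) : Real.cos x ≤ 1 - x^2/2 + x^4/24 := by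
  have := mono_aux (f := fun x => 1 - x^2/2 + x^4/24 - Real.cos x)
    (f' := fun y => -y + y^3/6 + Real.sin y)
    (fun y => by
      have := (((hasDerivAt_pow 2 y).div_const 2).neg.const_add 1).add
        ((hasDerivAt_pow 4 y).div_const 24) |>.sub (Real.hasDerivAt_cos y)
      exact this.congr_deriv (by norm_num; ring))
    (fun y hy => by nlinarith [sin_ge_cubic hy]) hx
  simp at this; linarith

lemma sin_le_quintic {x : ℝ} (hx : 0 ≤ x) : Real.sin x ≤ x - x^3/6 + x^5/120 := by
  have := mono_aux (f := fun x => x - x^3/6 + x^5/120 - Real.sin x)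
    (f' := fun y => 1 - y^2/2 + y^4/24 - Real.cos y)
    (fun y => by
      have := ((hasDerivAt_id y).sub ((hasDerivAt_pow 3 y).div_const 6)).add
        ((hasDerivAt_pow 5 y).div_const 120) |>.sub (Real.hasDerivAt_sin y)
      exact this.congr_deriv (by norm_num; ring))
    (fun y hy => by nlinarith [cos_le_quartic hy]) hx
  simp at this; linarith

lemma cos_ge_sextic {x : ℝ} (hx : 0 ≤ x) : 1 - x^2/2 + x^4/24 - x^6/720 ≤ Real.cos x := by
  have := mono_aux (f := fun x => Real.cos x - (1 - x^2/2 + x^4/24 - x^6/720))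
    (f' := fun y => -(Real.sin y) - (-y + y^3/6 - y^5/120))
    (fun y => by
      have := (Real.hasDerivAt_cos y).sub
        (((((hasDerivAt_pow 2 y).div_const 2).neg.const_add 1).add
          ((hasDerivAt_pow 4 y).div_const 24)).sub ((hasDerivAt_pow 6 y).div_const 720))
      exact this.congr_deriv (by norm_num; ring))
    (fun y hy => by nlinarith [sin_le_quintic hy]) hx
  simp at this; linarith

lemma poly1 {u : ℝ} (h0 : 0 < u) (h16 : u ≤ 1/16) :
    (1-4*u)^2 < (1 - 4.93481*u + 4.0587*u^2 - 1.33527*u^3)^2 * (1+4*u) := by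
  nlinarith [mul_pos h0 h0, mul_pos (mul_pos h0 h0) h0, sq_nonneg (u - 1/16),
    mul_nonneg (mul_nonneg h0.le h0.le) (sub_nonneg.2 h16),
    mul_nonneg (mul_nonneg (mul_nonneg h0.le h0.le) h0.le) (sub_nonneg.2 h16),
    mul_nonneg (mul_nonneg (mul_nonneg (mul_nonneg h0.le h0.le) h0.le) h0.le) (sub_nonneg.2 h16),
    mul_nonneg (mul_nonneg (mul_nonneg (mul_nonneg (mul_nonneg h0.le h0.le) h0.le) h0.le) h0.le) (sub_nonneg.2 h16)]

lemma poly1r {u : ℝ} (h0 : 0 ≤ u) (h16 : u ≤ 1/16) :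
    0 ≤ 1 - 4.93481*u + 4.0587*u^2 - 1.33527*u^3 := by
  nlinarith [mul_nonneg h0 h0, mul_nonneg (mul_nonneg h0 h0) h0,
    mul_nonneg (mul_nonneg h0 h0) (sub_nonneg.2 h16)]

lemma poly2 {w : ℝ} (h0 : 0 < w) (h4 : w < 1/4) :
    (1-4*(1/2-w)^2)^2 < (3.141592*w*(1-1.64494*w^2))^2 * (1+4*(1/2-w)^2) := by
  nlinarith [mul_pos h0 h0, mul_pos (mul_pos h0 h0) h0, sq_nonneg (w - 1/4),
    mul_nonneg (mul_nonneg h0.le h0.le) (sub_nonneg.2 h4.le),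
    mul_nonneg (mul_nonneg (mul_nonneg h0.le h0.le) h0.le) (sub_nonneg.2 h4.le),
    mul_nonneg (mul_nonneg (mul_nonneg (mul_nonneg h0.le h0.le) h0.le) h0.le) (sub_nonneg.2 h4.le),
    mul_nonneg (mul_nonneg (mul_nonneg (mul_nonneg (mul_nonneg h0.le h0.le) h0.le) h0.le) h0.le) (sub_nonneg.2 h4.le)]
open Real

lemma pi_sq_lt : π^2 < 9.86961 := by nlinarith [Real.pi_lt_d6, Real.pi_gt_d6]
lemma pi_sq_gt : (9.8696:ℝ) < π^2 := by nlinarith [Real.pi_gt_d6, Real.pi_pos]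

set_option maxHeartbeats 1000000 in
lemma key_pos {x : ℝ} (hx0 : 0 < x) (hx : x < 1/2) :
    (1 - 4*x^2)^2 < Real.cos (π*x)^2 * (1 + 4*x^2) := by
  have hπ := Real.pi_pos
  have hp2u := pi_sq_lt
  have hp2l := pi_sq_gt
  rcases le_or_gt x (1/4) with hcase | hcase
  · -- regime 1
    have hu0 : 0 < x^2 := by positivity
    have hu16 : x^2 ≤ 1/16 := by nlinarith
    have hc0 : 0 ≤ Real.cos (π*x) := by
      apply Real.cos_nonneg_of_mem_Icc
      constructor <;> nlinarith
    have hq := cos_ge_sextic (x := π*x) (by positivity)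
    have hp4l : (97.4088:ℝ) < π^4 := by nlinarith
    have hp6u : π^6 < 961.3944 := by nlinarith
    have hr : 1 - 4.93481*x^2 + 4.0587*(x^2)^2 - 1.33527*(x^2)^3 ≤ Real.cos (π*x) := by
      have h1 : (π^2/2 - 4.93481) * x^2 ≤ 0 :=
        mul_nonpos_of_nonpos_of_nonneg (by nlinarith) hu0.le
      have h2 : (4.0587 - π^4/24) * x^4 ≤ 0 :=
        mul_nonpos_of_nonpos_of_nonneg (by nlinarith) (by positivity)
      have h3 : (π^6/720 - 1.33527) * x^6 ≤ 0 :=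
        mul_nonpos_of_nonpos_of_nonneg (by nlinarith) (by positivity)
      nlinarith [hq, h1, h2, h3]
    have hr0 := poly1r hu0.le hu16
    have hpoly := poly1 hu0 hu16
    have hcr : (1 - 4.93481*x^2 + 4.0587*(x^2)^2 - 1.33527*(x^2)^3)^2 ≤ Real.cos (π*x)^2 :=
      pow_le_pow_left₀ hr0 hr 2
    calc (1 - 4*x^2)^2 < (1 - 4.93481*x^2 + 4.0587*(x^2)^2 - 1.33527*(x^2)^3)^2 * (1 + 4*x^2) := hpoly
    _ ≤ Real.cos (π*x)^2 * (1 + 4*x^2) :=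
      mul_le_mul_of_nonneg_right hcr (by positivity)
  · -- regime 2
    have hw0 : 0 < 1/2 - x := by linarith
    have hw4 : 1/2 - x < 1/4 := by linarith
    have hcs : Real.cos (π*x) = Real.sin (π*(1/2 - x)) := by
      rw [show π*x = π/2 - π*(1/2-x) by ring, Real.cos_pi_div_two_sub]
    have h2 : (1:ℝ) - 1.64494*(1/2-x)^2 ≤ 1 - π^2*(1/2-x)^2/6 := by
      have := mul_nonpos_of_nonpos_of_nonneg
        (show π^2/6 - 1.64494 ≤ 0 by linarith) (sq_nonneg (1/2-x))
      linarith [this]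
    have hwsq : (1/2-x)^2 < 1/16 := by nlinarith [mul_pos hw0 hw0]
    have h3 : (0:ℝ) < 1 - 1.64494*(1/2-x)^2 := by nlinarith [hwsq]
    have h4 : (3.141592:ℝ)*(1/2-x) ≤ π*(1/2-x) :=
      mul_le_mul_of_nonneg_right (le_of_lt Real.pi_gt_d6) hw0.le
    have hs := sin_ge_cubic (x := π*(1/2-x)) (by positivity)
    have hm : 3.141592*(1/2-x)*(1 - 1.64494*(1/2-x)^2) ≤ Real.sin (π*(1/2-x)) := by
      have hmm : 3.141592*(1/2-x)*(1 - 1.64494*(1/2-x)^2)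
          ≤ π*(1/2-x)*(1 - π^2*(1/2-x)^2/6) :=
        mul_le_mul h4 h2 h3.le (by positivity)
      have hre : π*(1/2-x)*(1 - π^2*(1/2-x)^2/6)
          = π*(1/2-x) - (π*(1/2-x))^3/6 := by ring
      linarith [hmm, hs, hre.le, hre.ge]
    have hm0 : (0:ℝ) ≤ 3.141592*(1/2-x)*(1 - 1.64494*(1/2-x)^2) :=
      mul_nonneg (by linarith) h3.le
    have hcr : (3.141592*(1/2-x)*(1 - 1.64494*(1/2-x)^2))^2 ≤ Real.cos (π*x)^2 := by
      rw [hcs]; exact pow_le_pow_left₀ hm0 hm 2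
    have hpoly := poly2 hw0 hw4
    have hxw : x = 1/2 - (1/2 - x) := by ring
    calc (1 - 4*x^2)^2 = (1-4*(1/2-(1/2-x))^2)^2 := by ring_nf
    _ < (3.141592*(1/2-x)*(1-1.64494*(1/2-x)^2))^2 * (1+4*(1/2-(1/2-x))^2) := hpoly
    _ ≤ Real.cos (π*x)^2 * (1 + 4*x^2) := by
        have : (1:ℝ)+4*(1/2-(1/2-x))^2 = 1 + 4*x^2 := by ring
        rw [this]
        exact mul_le_mul_of_nonneg_right hcr (by positivity)

theorem sin_sq_sum_ge_eight (θ : ℝ) (h1 : 0 < θ) (h2 : θ < 1) :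
    Real.sin (π * θ)^2 * (1/θ^2 + 1/(1-θ)^2) ≥ 8 ∧
    (Real.sin (π * θ)^2 * (1/θ^2 + 1/(1-θ)^2) = 8 ↔ θ = 1/2) := by
  have hθ2 : (0:ℝ) < θ^2 := pow_pos h1 2
  have h1θ2 : (0:ℝ) < (1-θ)^2 := pow_pos (by linarith) 2
  have hcs : Real.sin (π*θ) = Real.cos (π*(θ-1/2)) := by
    rw [show π*θ = π*(θ-1/2) + π/2 by ring, Real.sin_add_pi_div_two]
  by_cases hθ : θ = 1/2
  · subst hθ
    rw [show π*(1/2:ℝ) = π/2 by ring, Real.sin_pi_div_two]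
    norm_num
  · have hy0 : 0 < |θ - 1/2| := abs_pos.2 (sub_ne_zero.2 hθ)
    have hy2 : |θ - 1/2| < 1/2 := abs_lt.2 ⟨by linarith, by linarith⟩
    have hkey := key_pos hy0 hy2
    have habs : Real.cos (π*|θ-1/2|) ^ 2 = Real.cos (π*(θ-1/2)) ^ 2 := by
      rw [show π*|θ-1/2| = |π*(θ-1/2)| by rw [abs_mul, abs_of_pos Real.pi_pos],
        Real.cos_abs]
    rw [habs, sq_abs] at hkey
    -- hkey : (1 - 4*(θ-1/2)^2)^2 < cos(π(θ-1/2))^2 * (1 + 4*(θ-1/2)^2)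
    have hgt : Real.sin (π * θ)^2 * (1/θ^2 + 1/(1-θ)^2) > 8 := by
      rw [hcs]
      rw [show 1/θ^2 + 1/(1-θ)^2 = (1/2 + 2*(θ-1/2)^2)/(θ^2*(1-θ)^2) by
        have : (1:ℝ) - θ ≠ 0 := by linarith
        field_simp; ring]
      rw [gt_iff_lt, ← mul_div_assoc, lt_div_iff₀ (mul_pos hθ2 h1θ2)]
      nlinarith [hkey]
    refine ⟨le_of_lt hgt, ?_, fun he => absurd he hθ⟩
    intro he
    rw [he] at hgt
    exact absurd hgt (lt_irrefl 8)
end
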